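/- Theorem 1 (Curious Explorer is provable, deterministic form): with the Curious Explorer iterates, poorly visited sets K_n, and intrinsic rewards r_n, fix N ≥ 0 and nonnegative reals ε₀, …, ε_N, and assume for every 0 ≤ n ≤ N the ε_n-optimality condition sup_{π∈Π} V_{π,r_n}(μ_n) ≤ V_{π_{n+1},r_n}(μ_n) + ε_n. For s ∈ S set β̃(s) = β_{ñ(s)} with ñ(s) = max{ n ≤ N : s ∈ K_n } if s lies in some K_n with n ≤ N, and β̃(s) = 0 otherwise. Then Σ_{n=0}^N sup_{π∈Π} Σ_{s∈K_n} d_{δ_{s₀}}^π(s) ≤ 2 Σ_{n=0}^N ε_n + 2 Σ_{s∈S} β̃(s) + 2 Σ_{s∈S} sup_{π∈Π} d_{δ_{s₀}}^π(s). -/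

import Mathlib

open Finset

variable {S A : Type*} [Fintype S] [Fintype A] [Nonempty S] [Nonempty A] [DecidableEq S]

/-- `ρ` is a probability distribution on the finite type `S`. -/
def IsDist {S : Type*} [Fintype S] (ρ : S → ℝ) : Prop :=
  (∀ s, 0 ≤ ρ s) ∧ ∑ s, ρ s = 1

/-- `π` is a stationary policy: a probability distribution over actions at each state. -/
def IsPolicy (π : S → A → ℝ) : Prop := ∀ s, IsDist (π s)

/-- `P` is a transition kernel: `P s a` is a distribution on next states. -/
def IsKernel (P : S → A → S → ℝ) : Prop := ∀ s a, IsDist (P s a)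

/-- The induced state-transition kernel `K_π(s'|s) = Σ_a π(a|s) P(s'|s,a)`. -/
def kpol (P : S → A → S → ℝ) (π : S → A → ℝ) (s s' : S) : ℝ :=
  ∑ a, π s a * P s a s'

/-- One step of the Markov chain with kernel `K_π`: `ρ ↦ ρ K_π`. -/
def step (P : S → A → S → ℝ) (π : S → A → ℝ) (ρ : S → ℝ) : S → ℝ :=
  fun s' => ∑ s, ρ s * kpol P π s s'

/-- `ρ K_π^t`: the state distribution after `t` steps started from `ρ`. -/
def iterDist (P : S → A → S → ℝ) (π : S → A → ℝ) (ρ : S → ℝ) (t : ℕ) : S → ℝ :=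
  (step P π)^[t] ρ

/-- The discounted state visitation distribution
`d_ρ^π(s) = (1-γ) Σ_t γ^t (ρ K_π^t)(s)`. -/
noncomputable def dvisit (P : S → A → S → ℝ) (γ : ℝ) (π : S → A → ℝ)
    (ρ : S → ℝ) (s : S) : ℝ :=
  (1 - γ) * ∑' t : ℕ, γ ^ t * iterDist P π ρ t s

/-- The normalized value function
`V_{π,r}(ρ) = (1-γ) Σ_t γ^t Σ_{s,a} (ρ K_π^t)(s) π(a|s) r(s,a)`. -/
noncomputable def value (P : S → A → S → ℝ) (γ : ℝ) (π : S → A → ℝ)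
    (r : S → A → ℝ) (ρ : S → ℝ) : ℝ :=
  (1 - γ) * ∑' t : ℕ, γ ^ t * ∑ s, ∑ a, iterDist P π ρ t s * π s a * r s a

/-- The Dirac distribution at `s₀`. -/
def dirac (s₀ : S) : S → ℝ := fun s => if s = s₀ then 1 else 0

/-- Curious Explorer reset models: `ceMu P γ πseq s₀ 0 = μ₋₁ = δ_{s₀}` and,
for `n ≥ 0`, `ceMu P γ πseq s₀ (n+1) = μ_n = ½ D_n + ½ δ_{s₀}` where
`D_n = d_{μ_{n-1}}^{π_n}`. -/
noncomputable def ceMu (P : S → A → S → ℝ) (γ : ℝ) (πseq : ℕ → S → A → ℝ)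
    (s₀ : S) : ℕ → S → ℝ
  | 0 => dirac s₀
  | n + 1 => fun s =>
      (1 / 2) * dvisit P γ (πseq n) (ceMu P γ πseq s₀ n) s + (1 / 2) * dirac s₀ s

/-- `D_n = d_{μ_{n-1}}^{π_n}`. -/
noncomputable def ceD (P : S → A → S → ℝ) (γ : ℝ) (πseq : ℕ → S → A → ℝ)
    (s₀ : S) (n : ℕ) : S → ℝ :=
  dvisit P γ (πseq n) (ceMu P γ πseq s₀ n)

open scoped Classical in
/-- The set of poorly visited states `K_n = { s : Σ_{i=0}^n D_i(s) ≤ β_n }`. -/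
noncomputable def ceK (P : S → A → S → ℝ) (γ : ℝ) (πseq : ℕ → S → A → ℝ)
    (s₀ : S) (β : ℕ → ℝ) (n : ℕ) : Finset S :=
  Finset.univ.filter fun s => ∑ i ∈ Finset.range (n + 1), ceD P γ πseq s₀ i s ≤ β n

/-- The intrinsic reward `r_n(s,a) = 1_{s ∈ K_n}`. -/
noncomputable def ceR (P : S → A → S → ℝ) (γ : ℝ) (πseq : ℕ → S → A → ℝ)
    (s₀ : S) (β : ℕ → ℝ) (n : ℕ) (s : S) (_a : A) : ℝ :=
  if s ∈ ceK P γ πseq s₀ β n then 1 else 0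

open scoped Classical in
/-- `β̃(s) = β_{ñ(s)}` where `ñ(s) = max { n ≤ N : s ∈ K_n }` if `s` lies in some
`K_n` with `n ≤ N`, and `β̃(s) = 0` otherwise. -/
noncomputable def ceBetaTilde (P : S → A → S → ℝ) (γ : ℝ) (πseq : ℕ → S → A → ℝ)
    (s₀ : S) (β : ℕ → ℝ) (N : ℕ) (s : S) : ℝ :=
  if ∃ n ≤ N, s ∈ ceK P γ πseq s₀ β n then
    β (Nat.findGreatest (fun n => s ∈ ceK P γ πseq s₀ β n) N)
  else 0

section AuxLemmas
set_option linter.unusedSectionVars false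

variable {S A : Type*} [Fintype S] [Fintype A] [Nonempty S] [Nonempty A] [DecidableEq S]
variable {P : S → A → S → ℝ} {γ : ℝ} {π : S → A → ℝ} {ρ : S → ℝ}

lemma dirac_isDist (s₀ : S) : IsDist (dirac s₀) := by
  constructor
  · intro s; unfold dirac; split <;> norm_num
  · simp [dirac]

lemma kpol_nonneg (hP : IsKernel P) (hπ : IsPolicy π) (s s' : S) : 0 ≤ kpol P π s s' := by
  apply Finset.sum_nonneg
  intro a _
  exact mul_nonneg ((hπ s).1 a) ((hP s a).1 s')

lemma kpol_sum (hP : IsKernel P) (hπ : IsPolicy π) (s : S) : ∑ s', kpol P π s s' = 1 := by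
  unfold kpol
  rw [Finset.sum_comm]
  have : ∀ a ∈ Finset.univ, ∑ s', π s a * P s a s' = π s a := by
    intro a _
    rw [← Finset.mul_sum, (hP s a).2, mul_one]
  rw [Finset.sum_congr rfl this, (hπ s).2]

lemma step_nonneg (hP : IsKernel P) (hπ : IsPolicy π) (hρ : ∀ s, 0 ≤ ρ s) (s' : S) :
    0 ≤ step P π ρ s' :=
  Finset.sum_nonneg fun s _ => mul_nonneg (hρ s) (kpol_nonneg hP hπ s s')

lemma step_sum (hP : IsKernel P) (hπ : IsPolicy π) :
    ∑ s', step P π ρ s' = ∑ s, ρ s := by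
  unfold step
  rw [Finset.sum_comm]
  apply Finset.sum_congr rfl
  intro s _
  rw [← Finset.mul_sum, kpol_sum hP hπ, mul_one]

lemma step_linear {X : Type*} [Fintype X] (c : X → ℝ) (v : X → S → ℝ) (s' : S) :
    step P π (fun s => ∑ x, c x * v x s) s' = ∑ x, c x * step P π (v x) s' := by
  unfold step
  simp only [Finset.sum_mul, Finset.mul_sum]
  rw [Finset.sum_comm]
  apply Finset.sum_congr rfl
  intro x _
  apply Finset.sum_congr rfl
  intro s _
  ring

lemma iterDist_succ' (t : ℕ) :
    iterDist P π ρ (t + 1) = step P π (iterDist P π ρ t) := by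
  unfold iterDist
  rw [Function.iterate_succ_apply']

lemma iterDist_nonneg (hP : IsKernel P) (hπ : IsPolicy π) (hρ : ∀ s, 0 ≤ ρ s) (t : ℕ) :
    ∀ s, 0 ≤ iterDist P π ρ t s := by
  induction t with
  | zero => exact hρ
  | succ t ih =>
      intro s
      rw [iterDist_succ']
      exact step_nonneg hP hπ ih s

lemma iterDist_sum (hP : IsKernel P) (hπ : IsPolicy π) (t : ℕ) :
    ∑ s, iterDist P π ρ t s = ∑ s, ρ s := by
  induction t with
  | zero => rfl
  | succ t ih =>
      have : ∀ s, iterDist P π ρ (t+1) s = step P π (iterDist P π ρ t) s := by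
        intro s; rw [iterDist_succ']
      rw [Finset.sum_congr rfl (fun s _ => this s), step_sum hP hπ, ih]

lemma iterDist_le_one (hP : IsKernel P) (hπ : IsPolicy π) (hρ : IsDist ρ) (t : ℕ) (s : S) :
    iterDist P π ρ t s ≤ 1 := by
  have h1 : iterDist P π ρ t s ≤ ∑ s', iterDist P π ρ t s' :=
    Finset.single_le_sum (fun i _ => iterDist_nonneg hP hπ hρ.1 t i) (Finset.mem_univ s)
  rw [iterDist_sum hP hπ, hρ.2] at h1
  exact h1

lemma iterDist_decomp (t : ℕ) :
    iterDist P π ρ t = fun s => ∑ x, ρ x * iterDist P π (dirac x) t s := by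
  induction t with
  | zero =>
      funext s
      show ρ s = ∑ x, ρ x * dirac x s
      unfold dirac
      rw [Finset.sum_congr rfl (fun x _ => by rw [mul_ite, mul_one, mul_zero])]
      rw [Finset.sum_ite_eq Finset.univ s ρ, if_pos (Finset.mem_univ s)]
  | succ t ih =>
      funext s
      rw [iterDist_succ', ih]
      have := step_linear (P := P) (π := π) ρ (fun x => iterDist P π (dirac x) t) s
      rw [this]
      apply Finset.sum_congr rfl
      intro x _
      rw [iterDist_succ']

end AuxLemmas
section DvisitLemmas
set_option linter.unusedSectionVars false

variable {S A : Type*} [Fintype S] [Fintype A] [Nonempty S] [Nonempty A] [DecidableEq S]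
variable {P : S → A → S → ℝ} {γ : ℝ} {π : S → A → ℝ} {ρ : S → ℝ}

lemma summable_iter (hP : IsKernel P) (hπ : IsPolicy π) (hρ : IsDist ρ)
    (hγ0 : 0 ≤ γ) (hγ1 : γ < 1) (s : S) :
    Summable (fun t => γ ^ t * iterDist P π ρ t s) := by
  apply Summable.of_nonneg_of_le
  · intro t
    exact mul_nonneg (pow_nonneg hγ0 t) (iterDist_nonneg hP hπ hρ.1 t s)
  · intro t
    calc γ ^ t * iterDist P π ρ t s ≤ γ ^ t * 1 := by
          apply mul_le_mul_of_nonneg_left (iterDist_le_one hP hπ hρ t s) (pow_nonneg hγ0 t)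
      _ = γ ^ t := mul_one _
  · exact summable_geometric_of_lt_one hγ0 hγ1

lemma dvisit_nonneg (hP : IsKernel P) (hπ : IsPolicy π) (hρ : IsDist ρ)
    (hγ0 : 0 ≤ γ) (hγ1 : γ < 1) (s : S) :
    0 ≤ dvisit P γ π ρ s := by
  unfold dvisit
  apply mul_nonneg (by linarith)
  apply tsum_nonneg
  intro t
  exact mul_nonneg (pow_nonneg hγ0 t) (iterDist_nonneg hP hπ hρ.1 t s)

lemma dvisit_sum_eq_one (hP : IsKernel P) (hπ : IsPolicy π) (hρ : IsDist ρ)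
    (hγ0 : 0 ≤ γ) (hγ1 : γ < 1) :
    ∑ s, dvisit P γ π ρ s = 1 := by
  unfold dvisit
  rw [← Finset.mul_sum]
  have swap : ∑ s, ∑' t, γ ^ t * iterDist P π ρ t s
      = ∑' t, ∑ s, γ ^ t * iterDist P π ρ t s := by
    rw [Summable.tsum_finsetSum (fun s _ => summable_iter hP hπ hρ hγ0 hγ1 s)]
  rw [swap]
  have : ∀ t : ℕ, ∑ s, γ ^ t * iterDist P π ρ t s = γ ^ t := by
    intro t
    rw [← Finset.mul_sum, iterDist_sum hP hπ, hρ.2, mul_one]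
  rw [tsum_congr this, tsum_geometric_of_lt_one hγ0 hγ1]
  rw [mul_inv_cancel₀ (by linarith : (1:ℝ) - γ ≠ 0)]

lemma dvisit_le_one (hP : IsKernel P) (hπ : IsPolicy π) (hρ : IsDist ρ)
    (hγ0 : 0 ≤ γ) (hγ1 : γ < 1) (s : S) :
    dvisit P γ π ρ s ≤ 1 := by
  have h1 : dvisit P γ π ρ s ≤ ∑ s', dvisit P γ π ρ s' :=
    Finset.single_le_sum (fun i _ => dvisit_nonneg hP hπ hρ hγ0 hγ1 i) (Finset.mem_univ s)
  rw [dvisit_sum_eq_one hP hπ hρ hγ0 hγ1] at h1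
  exact h1

lemma dvisit_isDist (hP : IsKernel P) (hπ : IsPolicy π) (hρ : IsDist ρ)
    (hγ0 : 0 ≤ γ) (hγ1 : γ < 1) :
    IsDist (dvisit P γ π ρ) :=
  ⟨fun s => dvisit_nonneg hP hπ hρ hγ0 hγ1 s, dvisit_sum_eq_one hP hπ hρ hγ0 hγ1⟩

/-- decomposition of the visitation distribution over starting states -/
lemma dvisit_decomp (hP : IsKernel P) (hπ : IsPolicy π) (hρ : IsDist ρ)
    (hγ0 : 0 ≤ γ) (hγ1 : γ < 1) (s : S) :
    dvisit P γ π ρ s = ∑ x, ρ x * dvisit P γ π (dirac x) s := by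
  unfold dvisit
  have h1 : ∀ t : ℕ, γ ^ t * iterDist P π ρ t s
      = ∑ x, ρ x * (γ ^ t * iterDist P π (dirac x) t s) := by
    intro t
    rw [iterDist_decomp (P := P) (π := π) (ρ := ρ) t]
    rw [Finset.mul_sum]
    apply Finset.sum_congr rfl
    intro x _
    ring
  rw [tsum_congr h1]
  rw [Summable.tsum_finsetSum (fun x _ => (summable_iter hP hπ (dirac_isDist x) hγ0 hγ1 s).mul_left (ρ x))]
  rw [Finset.mul_sum]
  apply Finset.sum_congr rfl
  intro x _
  rw [tsum_mul_left]
  ring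

/-- the flow (Bellman) equation for the visitation distribution -/
lemma dvisit_flow (hP : IsKernel P) (hπ : IsPolicy π) (hρ : IsDist ρ)
    (hγ0 : 0 ≤ γ) (hγ1 : γ < 1) (s : S) :
    dvisit P γ π ρ s = (1 - γ) * ρ s + γ * step P π (dvisit P γ π ρ) s := by
  have hsum := summable_iter hP hπ hρ hγ0 hγ1 s
  have key : ∑' t, γ ^ t * iterDist P π ρ t s
      = ρ s + γ * ∑ s', (∑' t, γ ^ t * iterDist P π ρ t s') * kpol P π s' s := by
    rw [Summable.tsum_eq_zero_add hsum]
    simp only [pow_zero, one_mul]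
    congr 1
    have h2 : ∀ t : ℕ, γ ^ (t+1) * iterDist P π ρ (t+1) s
        = γ * ∑ s', (γ ^ t * iterDist P π ρ t s') * kpol P π s' s := by
      intro t
      rw [iterDist_succ']
      unfold step
      rw [Finset.mul_sum, Finset.mul_sum]
      apply Finset.sum_congr rfl
      intro s' _
      ring
    rw [tsum_congr h2, tsum_mul_left]
    congr 1
    rw [Summable.tsum_finsetSum (fun s' _ => ((summable_iter hP hπ hρ hγ0 hγ1 s').mul_right _))]
    apply Finset.sum_congr rfl
    intro s' _
    rw [tsum_mul_right]
  unfold dvisit step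
  rw [key]
  have hpull : ∑ s', ((fun s0 => (1 - γ) * ∑' t, γ ^ t * iterDist P π ρ t s0) s') * kpol P π s' s
      = (1 - γ) * ∑ s', (∑' t, γ ^ t * iterDist P π ρ t s') * kpol P π s' s := by
    rw [Finset.mul_sum]
    apply Finset.sum_congr rfl
    intro s' _
    ring
  rw [hpull]
  ring

/-- uniqueness of solutions of the flow equation -/
lemma flow_unique (hP : IsKernel P) (hπ : IsPolicy π) (hγ0 : 0 ≤ γ) (hγ1 : γ < 1)
    {x y : S → ℝ}
    (hx : ∀ s, x s = (1 - γ) * ρ s + γ * step P π x s)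
    (hy : ∀ s, y s = (1 - γ) * ρ s + γ * step P π y s) :
    x = y := by
  set d : S → ℝ := fun s => x s - y s with hd
  have hstep : ∀ s, d s = γ * step P π d s := by
    intro s
    have : x s - y s = γ * (step P π x s - step P π y s) := by
      rw [hx s, hy s]; ring
    rw [hd]
    simp only []
    rw [this]
    congr 1
    unfold step
    rw [← Finset.sum_sub_distrib]
    apply Finset.sum_congr rfl
    intro s' _
    ring
  have habs : ∑ s, |d s| ≤ γ * ∑ s, |d s| := by
    calc ∑ s, |d s| = ∑ s, |γ * step P π d s| := by
            apply Finset.sum_congr rfl; intro s _; rw [← hstep s]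
      _ = γ * ∑ s, |step P π d s| := by
            rw [Finset.mul_sum]
            apply Finset.sum_congr rfl
            intro s _
            rw [abs_mul, abs_of_nonneg hγ0]
      _ ≤ γ * ∑ s, ∑ s', |d s'| * kpol P π s' s := by
            apply mul_le_mul_of_nonneg_left _ hγ0
            apply Finset.sum_le_sum
            intro s _
            unfold step
            calc |∑ s', d s' * kpol P π s' s| ≤ ∑ s', |d s' * kpol P π s' s| :=
                  Finset.abs_sum_le_sum_abs _ _
              _ = ∑ s', |d s'| * kpol P π s' s := by
                  apply Finset.sum_congr rfl
                  intro s' _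
                  rw [abs_mul, abs_of_nonneg (kpol_nonneg hP hπ s' s)]
      _ = γ * ∑ s', |d s'| := by
            congr 1
            rw [Finset.sum_comm]
            apply Finset.sum_congr rfl
            intro s' _
            rw [← Finset.mul_sum, kpol_sum hP hπ, mul_one]
  have hsum0 : ∑ s, |d s| ≤ 0 := by nlinarith [Finset.sum_nonneg (fun (s : S) (_ : s ∈ Finset.univ) => abs_nonneg (d s))]
  funext s
  have h1 : |d s| ≤ ∑ s', |d s'| :=
    Finset.single_le_sum (fun i _ => abs_nonneg (d i)) (Finset.mem_univ s)
  have : |d s| ≤ 0 := le_trans h1 hsum0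
  have : d s = 0 := abs_eq_zero.mp (le_antisymm this (abs_nonneg _))
  have hxy : x s - y s = 0 := this
  linarith

end DvisitLemmas
section ValueWitness
set_option linter.unusedSectionVars false
set_option linter.unusedVariables false

variable {S A : Type*} [Fintype S] [Fintype A] [Nonempty S] [Nonempty A] [DecidableEq S]
variable {P : S → A → S → ℝ} {γ : ℝ} {π : S → A → ℝ} {ρ : S → ℝ}

/-- value of an indicator reward is the visitation mass of the set -/
lemma value_indicator (hP : IsKernel P) (hπ : IsPolicy π) (hρ : IsDist ρ)
    (hγ0 : 0 ≤ γ) (hγ1 : γ < 1) (K : Finset S) (r : S → A → ℝ)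
    (hr : ∀ s a, r s a = if s ∈ K then 1 else 0) :
    value P γ π r ρ = ∑ s ∈ K, dvisit P γ π ρ s := by
  unfold value
  have hinner : ∀ t : ℕ, ∑ s, ∑ a, iterDist P π ρ t s * π s a * r s a
      = ∑ s, (if s ∈ K then iterDist P π ρ t s else 0) := by
    intro t
    apply Finset.sum_congr rfl
    intro s _
    by_cases h : s ∈ K
    · rw [if_pos h]
      have : ∀ a ∈ Finset.univ, iterDist P π ρ t s * π s a * r s a
          = iterDist P π ρ t s * π s a := by
        intro a _
        rw [hr s a, if_pos h, mul_one]
      rw [Finset.sum_congr rfl this, ← Finset.mul_sum, (hπ s).2, mul_one]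
    · rw [if_neg h]
      apply Finset.sum_eq_zero
      intro a _
      rw [hr s a, if_neg h, mul_zero]
  have hterm : ∀ t : ℕ, γ ^ t * ∑ s, ∑ a, iterDist P π ρ t s * π s a * r s a
      = ∑ s, (if s ∈ K then γ ^ t * iterDist P π ρ t s else 0) := by
    intro t
    rw [hinner t, Finset.mul_sum]
    apply Finset.sum_congr rfl
    intro s _
    by_cases h : s ∈ K <;> simp [h]
  rw [tsum_congr hterm]
  rw [Summable.tsum_finsetSum (β := ℕ)
    (f := fun s t => if s ∈ K then γ ^ t * iterDist P π ρ t s else 0)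
    (fun s _ => by
      by_cases h : s ∈ K
      · simp only [h, if_true]
        exact summable_iter hP hπ hρ hγ0 hγ1 s
      · simp only [h, if_false]
        exact summable_zero)]
  have hps : ∀ s : S, ∑' t : ℕ, (if s ∈ K then γ ^ t * iterDist P π ρ t s else 0)
      = if s ∈ K then ∑' t : ℕ, γ ^ t * iterDist P π ρ t s else 0 := by
    intro s
    by_cases h : s ∈ K <;> simp [h]
  rw [Finset.sum_congr rfl (fun s _ => hps s), Finset.mul_sum]
  have : ∀ s ∈ Finset.univ, (1 - γ) * (if s ∈ K then ∑' t : ℕ, γ ^ t * iterDist P π ρ t s else 0)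
      = if s ∈ K then dvisit P γ π ρ s else 0 := by
    intro s _
    by_cases h : s ∈ K <;> simp [h, dvisit]
  rw [Finset.sum_congr rfl this, Finset.sum_ite_mem, Finset.univ_inter]

end ValueWitness
section Witness
set_option linter.unusedSectionVars false
set_option linter.unusedVariables false

variable {S A : Type*} [Fintype S] [Fintype A] [Nonempty S] [Nonempty A] [DecidableEq S]

/-- start-dependent policy family: follow `πstar` if started at `s₀`, else `πp` -/
def sigPol (πstar πp : S → A → ℝ) (s₀ : S) (x : S) : S → A → ℝ :=
  if x = s₀ then πstar else πp

/-- the mixture-of-starts visitation distribution -/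
noncomputable def wdist (P : S → A → S → ℝ) (γ : ℝ) (μ : S → ℝ)
    (πstar πp : S → A → ℝ) (s₀ : S) : S → ℝ :=
  fun s => ∑ x, μ x * dvisit P γ (sigPol πstar πp s₀ x) (dirac x) s

/-- the associated state-action occupancy -/
noncomputable def wlam (P : S → A → S → ℝ) (γ : ℝ) (μ : S → ℝ)
    (πstar πp : S → A → ℝ) (s₀ : S) : S → A → ℝ :=
  fun s a => ∑ x, μ x * dvisit P γ (sigPol πstar πp s₀ x) (dirac x) s *
    (sigPol πstar πp s₀ x) s a

/-- the stationary witness policy realizing the mixture of starts -/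
noncomputable def wpol (P : S → A → S → ℝ) (γ : ℝ) (μ : S → ℝ)
    (πstar πp : S → A → ℝ) (s₀ : S) : S → A → ℝ :=
  fun s a => if wdist P γ μ πstar πp s₀ s = 0 then πp s a
    else wlam P γ μ πstar πp s₀ s a / wdist P γ μ πstar πp s₀ s

variable {P : S → A → S → ℝ} {γ : ℝ} {μ : S → ℝ} {πstar πp : S → A → ℝ} {s₀ : S}

lemma sigPol_isPolicy (hπstar : IsPolicy πstar) (hπp : IsPolicy πp) (x : S) :
    IsPolicy (sigPol πstar πp s₀ x) := by
  unfold sigPol; split <;> assumption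

lemma wdist_nonneg (hP : IsKernel P) (hμ : IsDist μ)
    (hπstar : IsPolicy πstar) (hπp : IsPolicy πp) (hγ0 : 0 ≤ γ) (hγ1 : γ < 1) (s : S) :
    0 ≤ wdist P γ μ πstar πp s₀ s := by
  apply Finset.sum_nonneg
  intro x _
  exact mul_nonneg (hμ.1 x)
    (dvisit_nonneg hP (sigPol_isPolicy hπstar hπp x) (dirac_isDist x) hγ0 hγ1 s)

lemma wlam_nonneg (hP : IsKernel P) (hμ : IsDist μ)
    (hπstar : IsPolicy πstar) (hπp : IsPolicy πp) (hγ0 : 0 ≤ γ) (hγ1 : γ < 1) (s : S) (a : A) :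
    0 ≤ wlam P γ μ πstar πp s₀ s a := by
  apply Finset.sum_nonneg
  intro x _
  exact mul_nonneg (mul_nonneg (hμ.1 x)
    (dvisit_nonneg hP (sigPol_isPolicy hπstar hπp x) (dirac_isDist x) hγ0 hγ1 s))
    (((sigPol_isPolicy hπstar hπp x) s).1 a)

lemma wlam_sum (hπstar : IsPolicy πstar) (hπp : IsPolicy πp) (s : S) :
    ∑ a, wlam P γ μ πstar πp s₀ s a = wdist P γ μ πstar πp s₀ s := by
  unfold wlam wdist
  rw [Finset.sum_comm]
  apply Finset.sum_congr rfl
  intro x _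
  rw [← Finset.mul_sum, ((sigPol_isPolicy hπstar hπp x) s).2, mul_one]

lemma wpol_isPolicy (hP : IsKernel P) (hμ : IsDist μ)
    (hπstar : IsPolicy πstar) (hπp : IsPolicy πp) (hγ0 : 0 ≤ γ) (hγ1 : γ < 1) :
    IsPolicy (wpol P γ μ πstar πp s₀) := by
  intro s
  unfold wpol
  by_cases h : wdist P γ μ πstar πp s₀ s = 0
  · simp only [h, if_true]
    exact hπp s
  · simp only [h, if_false]
    constructor
    · intro a
      apply div_nonneg (wlam_nonneg hP hμ hπstar hπp hγ0 hγ1 s a)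
      exact wdist_nonneg hP hμ hπstar hπp hγ0 hγ1 s
    · rw [← Finset.sum_div, wlam_sum hπstar hπp, div_self h]

lemma wdist_mul_wpol (hP : IsKernel P) (hμ : IsDist μ)
    (hπstar : IsPolicy πstar) (hπp : IsPolicy πp) (hγ0 : 0 ≤ γ) (hγ1 : γ < 1) (s : S) (a : A) :
    wdist P γ μ πstar πp s₀ s * wpol P γ μ πstar πp s₀ s a = wlam P γ μ πstar πp s₀ s a := by
  unfold wpol
  by_cases h : wdist P γ μ πstar πp s₀ s = 0
  · simp only [h, if_true, zero_mul]
    -- each term of wlam is nonneg and they sum (over a) to wdist s = 0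
    have hle : wlam P γ μ πstar πp s₀ s a ≤ 0 := by
      have h1 : wlam P γ μ πstar πp s₀ s a ≤ ∑ a', wlam P γ μ πstar πp s₀ s a' :=
        Finset.single_le_sum (fun a' _ => wlam_nonneg hP hμ hπstar hπp hγ0 hγ1 s a')
          (Finset.mem_univ a)
      rw [wlam_sum hπstar hπp, h] at h1
      exact h1
    exact (le_antisymm hle (wlam_nonneg hP hμ hπstar hπp hγ0 hγ1 s a)).symm
  · simp only [h, if_false]
    field_simp

lemma wdist_flow (hP : IsKernel P) (hμ : IsDist μ)
    (hπstar : IsPolicy πstar) (hπp : IsPolicy πp) (hγ0 : 0 ≤ γ) (hγ1 : γ < 1) (s : S) :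
    wdist P γ μ πstar πp s₀ s
      = (1 - γ) * μ s + γ * step P (wpol P γ μ πstar πp s₀) (wdist P γ μ πstar πp s₀) s := by
  have hflow : ∀ x : S, dvisit P γ (sigPol πstar πp s₀ x) (dirac x) s
      = (1 - γ) * dirac x s
        + γ * step P (sigPol πstar πp s₀ x) (dvisit P γ (sigPol πstar πp s₀ x) (dirac x)) s :=
    fun x => dvisit_flow hP (sigPol_isPolicy hπstar hπp x) (dirac_isDist x) hγ0 hγ1 s
  have lhs_eq : wdist P γ μ πstar πp s₀ s
      = (1 - γ) * μ s
        + γ * ∑ x, μ x * step P (sigPol πstar πp s₀ x)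
            (dvisit P γ (sigPol πstar πp s₀ x) (dirac x)) s := by
    unfold wdist
    have expand : ∀ x ∈ Finset.univ,
        μ x * dvisit P γ (sigPol πstar πp s₀ x) (dirac x) s
        = (1 - γ) * (μ x * dirac x s)
          + γ * (μ x * step P (sigPol πstar πp s₀ x)
              (dvisit P γ (sigPol πstar πp s₀ x) (dirac x)) s) := by
      intro x _
      rw [hflow x]; ring
    rw [Finset.sum_congr rfl expand, Finset.sum_add_distrib, ← Finset.mul_sum, ← Finset.mul_sum]
    have hd : ∑ x, μ x * dirac x s = μ s := by
      unfold dirac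
      rw [Finset.sum_congr rfl (fun x _ => by rw [mul_ite, mul_one, mul_zero])]
      rw [Finset.sum_ite_eq Finset.univ s μ, if_pos (Finset.mem_univ s)]
    rw [hd]
  rw [lhs_eq]
  congr 2
  -- step of the witness equals the mixture of steps
  unfold step kpol
  have h1 : ∀ s' ∈ Finset.univ, wdist P γ μ πstar πp s₀ s' *
        ∑ a, wpol P γ μ πstar πp s₀ s' a * P s' a s
      = ∑ a, wlam P γ μ πstar πp s₀ s' a * P s' a s := by
    intro s' _
    rw [Finset.mul_sum]
    apply Finset.sum_congr rfl
    intro a _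
    rw [← mul_assoc, wdist_mul_wpol hP hμ hπstar hπp hγ0 hγ1 s' a]
  rw [Finset.sum_congr rfl h1]
  have h2 : ∀ s' ∈ Finset.univ, ∑ a, wlam P γ μ πstar πp s₀ s' a * P s' a s
      = ∑ x, μ x * (dvisit P γ (sigPol πstar πp s₀ x) (dirac x) s' *
          ∑ a, (sigPol πstar πp s₀ x) s' a * P s' a s) := by
    intro s' _
    unfold wlam
    simp only [Finset.sum_mul]
    rw [Finset.sum_comm]
    apply Finset.sum_congr rfl
    intro x _
    rw [Finset.mul_sum, Finset.mul_sum]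
    apply Finset.sum_congr rfl
    intro a _
    ring
  rw [Finset.sum_congr rfl h2, Finset.sum_comm]
  apply Finset.sum_congr rfl
  intro x _
  rw [Finset.mul_sum]

/-- the key fact: the witness policy's visitation from `μ` is the start-mixture -/
lemma dvisit_wpol (hP : IsKernel P) (hμ : IsDist μ)
    (hπstar : IsPolicy πstar) (hπp : IsPolicy πp) (hγ0 : 0 ≤ γ) (hγ1 : γ < 1) :
    dvisit P γ (wpol P γ μ πstar πp s₀) μ = wdist P γ μ πstar πp s₀ := by
  have hwp := wpol_isPolicy (s₀ := s₀) hP hμ hπstar hπp hγ0 hγ1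
  exact flow_unique (ρ := μ) hP hwp hγ0 hγ1
    (fun s => dvisit_flow hP hwp hμ hγ0 hγ1 s)
    (fun s => wdist_flow hP hμ hπstar hπp hγ0 hγ1 s)

end Witness
section Master
set_option linter.unusedSectionVars false
set_option linter.unusedVariables false

variable {S A : Type*} [Fintype S] [Fintype A] [Nonempty S] [Nonempty A] [DecidableEq S]
variable {P : S → A → S → ℝ} {γ : ℝ} {πseq : ℕ → S → A → ℝ} {s₀ : S} {β : ℕ → ℝ}

lemma unif_isPolicy : IsPolicy (fun (_ : S) (_ : A) => (Fintype.card A : ℝ)⁻¹) := by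
  intro s
  constructor
  · intro a
    positivity
  · rw [Finset.sum_const, nsmul_eq_mul, ← Finset.card_univ]
    have : (Fintype.card A : ℝ) ≠ 0 := by
      simp [Fintype.card_ne_zero]
    rw [Finset.card_univ, mul_inv_cancel₀ this]

lemma nonempty_policy : Nonempty {π' : S → A → ℝ // IsPolicy π'} :=
  ⟨⟨_, unif_isPolicy⟩⟩

lemma ceMu_isDist (hP : IsKernel P) (hπseq : ∀ k, IsPolicy (πseq k))
    (hγ0 : 0 ≤ γ) (hγ1 : γ < 1) (n : ℕ) : IsDist (ceMu P γ πseq s₀ n) := by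
  induction n with
  | zero => exact dirac_isDist s₀
  | succ n ih =>
      have hdv := dvisit_isDist hP (hπseq n) ih hγ0 hγ1
      constructor
      · intro s
        show 0 ≤ (1/2) * dvisit P γ (πseq n) (ceMu P γ πseq s₀ n) s + (1/2) * dirac s₀ s
        have := hdv.1 s
        have := (dirac_isDist s₀).1 s
        nlinarith
      · show ∑ s, ((1/2) * dvisit P γ (πseq n) (ceMu P γ πseq s₀ n) s + (1/2) * dirac s₀ s) = 1
        rw [Finset.sum_add_distrib, ← Finset.mul_sum, ← Finset.mul_sum, hdv.2,
          (dirac_isDist s₀).2]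
        norm_num

lemma ceD_isDist (hP : IsKernel P) (hπseq : ∀ k, IsPolicy (πseq k))
    (hγ0 : 0 ≤ γ) (hγ1 : γ < 1) (n : ℕ) : IsDist (ceD P γ πseq s₀ n) :=
  dvisit_isDist hP (hπseq n) (ceMu_isDist hP hπseq hγ0 hγ1 n) hγ0 hγ1

lemma ceMu_succ_s0 (hP : IsKernel P) (hπseq : ∀ k, IsPolicy (πseq k))
    (hγ0 : 0 ≤ γ) (hγ1 : γ < 1) (n : ℕ) :
    (1:ℝ)/2 ≤ ceMu P γ πseq s₀ (n+1) s₀ := by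
  show (1:ℝ)/2 ≤ (1/2) * dvisit P γ (πseq n) (ceMu P γ πseq s₀ n) s₀ + (1/2) * dirac s₀ s₀
  have h1 : dirac s₀ s₀ = 1 := by simp [dirac]
  have h2 := (ceD_isDist (s₀ := s₀) hP hπseq hγ0 hγ1 n).1 s₀
  unfold ceD at h2
  rw [h1]
  nlinarith

/-- the fresh part is at most twice the actual visitation -/
lemma fresh_le_two_ceD (hP : IsKernel P) (hπseq : ∀ k, IsPolicy (πseq k))
    (hγ0 : 0 ≤ γ) (hγ1 : γ < 1) (n : ℕ) (s : S) :
    dvisit P γ (πseq (n+1)) (dirac s₀) s ≤ 2 * ceD P γ πseq s₀ (n+1) s := by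
  have hμ := ceMu_isDist (s₀ := s₀) hP hπseq hγ0 hγ1 (n+1)
  have hdec := dvisit_decomp (π := πseq (n+1)) hP (hπseq (n+1)) hμ hγ0 hγ1 (ρ := ceMu P γ πseq s₀ (n+1)) s
  have hterm : ∀ x ∈ Finset.univ,
      0 ≤ ceMu P γ πseq s₀ (n+1) x * dvisit P γ (πseq (n+1)) (dirac x) s := by
    intro x _
    exact mul_nonneg (hμ.1 x) (dvisit_nonneg hP (hπseq (n+1)) (dirac_isDist x) hγ0 hγ1 s)
  have hsingle : ceMu P γ πseq s₀ (n+1) s₀ * dvisit P γ (πseq (n+1)) (dirac s₀) s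
      ≤ ∑ x, ceMu P γ πseq s₀ (n+1) x * dvisit P γ (πseq (n+1)) (dirac x) s :=
    Finset.single_le_sum hterm (Finset.mem_univ s₀)
  have h0 : ceD P γ πseq s₀ (n+1) s = dvisit P γ (πseq (n+1)) (ceMu P γ πseq s₀ (n+1)) s := rfl
  rw [h0, hdec]
  have hnn : 0 ≤ dvisit P γ (πseq (n+1)) (dirac s₀) s :=
    dvisit_nonneg hP (hπseq (n+1)) (dirac_isDist s₀) hγ0 hγ1 s
  have hhalf := ceMu_succ_s0 (s₀ := s₀) hP hπseq hγ0 hγ1 n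
  nlinarith

lemma bdd_sum_range (hP : IsKernel P) (hγ0 : 0 ≤ γ) (hγ1 : γ < 1) (K : Finset S)
    {μ : S → ℝ} (hμ : IsDist μ) :
    BddAbove (Set.range fun π : {π' : S → A → ℝ // IsPolicy π'} =>
      ∑ s ∈ K, dvisit P γ π.1 μ s) := by
  refine ⟨1, ?_⟩
  rintro v ⟨π, rfl⟩
  calc ∑ s ∈ K, dvisit P γ π.1 μ s ≤ ∑ s, dvisit P γ π.1 μ s := by
        apply Finset.sum_le_sum_of_subset_of_nonneg (Finset.subset_univ K)
        intro s _ _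
        exact dvisit_nonneg hP π.2 hμ hγ0 hγ1 s
    _ = 1 := dvisit_sum_eq_one hP π.2 hμ hγ0 hγ1

lemma bdd_pt_range (hP : IsKernel P) (hγ0 : 0 ≤ γ) (hγ1 : γ < 1)
    {μ : S → ℝ} (hμ : IsDist μ) (s : S) :
    BddAbove (Set.range fun π : {π' : S → A → ℝ // IsPolicy π'} =>
      dvisit P γ π.1 μ s) := by
  refine ⟨1, ?_⟩
  rintro v ⟨π, rfl⟩
  exact dvisit_le_one hP π.2 hμ hγ0 hγ1 s

lemma bdd_value_range (hP : IsKernel P) (hγ0 : 0 ≤ γ) (hγ1 : γ < 1) (n : ℕ)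
    {μ : S → ℝ} (hμ : IsDist μ) :
    BddAbove (Set.range fun π : {π' : S → A → ℝ // IsPolicy π'} =>
      value P γ π.1 (ceR P γ πseq s₀ β n) μ) := by
  refine ⟨1, ?_⟩
  rintro v ⟨π, rfl⟩
  show value P γ π.1 (ceR P γ πseq s₀ β n) μ ≤ 1
  rw [value_indicator hP π.2 hμ hγ0 hγ1 (ceK P γ πseq s₀ β n) (ceR P γ πseq s₀ β n) (fun s a => rfl)]
  calc ∑ s ∈ ceK P γ πseq s₀ β n, dvisit P γ π.1 μ s ≤ ∑ s, dvisit P γ π.1 μ s := by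
        apply Finset.sum_le_sum_of_subset_of_nonneg (Finset.subset_univ _)
        intro s _ _
        exact dvisit_nonneg hP π.2 hμ hγ0 hγ1 s
    _ = 1 := dvisit_sum_eq_one hP π.2 hμ hγ0 hγ1

/-- THE MASTER INEQUALITY: the optimal coverage of `K_n` from `s₀` is at most the
coverage achieved by `π_{n+1}` from `s₀`, up to `2 ε n`. -/
lemma master_ineq (hP : IsKernel P) (hγ0 : 0 ≤ γ) (hγ1 : γ < 1)
    (hπseq : ∀ k, IsPolicy (πseq k)) (N : ℕ) (ε : ℕ → ℝ) (hε : ∀ n ≤ N, 0 ≤ ε n)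
    (hopt : ∀ n ≤ N,
      (⨆ π : {π' : S → A → ℝ // IsPolicy π'},
        value P γ π.1 (ceR P γ πseq s₀ β n) (ceMu P γ πseq s₀ (n + 1))) ≤
      value P γ (πseq (n + 1)) (ceR P γ πseq s₀ β n) (ceMu P γ πseq s₀ (n + 1))
        + ε n)
    (n : ℕ) (hn : n ≤ N) (πst : S → A → ℝ) (hπst : IsPolicy πst) :
    ∑ s ∈ ceK P γ πseq s₀ β n, dvisit P γ πst (dirac s₀) s ≤
      ∑ s ∈ ceK P γ πseq s₀ β n, dvisit P γ (πseq (n+1)) (dirac s₀) s + 2 * ε n := by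
  set μ := ceMu P γ πseq s₀ (n+1) with hμdef
  have hμ : IsDist μ := ceMu_isDist hP hπseq hγ0 hγ1 (n+1)
  set πp := πseq (n+1) with hπpdef
  have hπp : IsPolicy πp := hπseq (n+1)
  set K := ceK P γ πseq s₀ β n with hKdef
  -- the witness policy
  set w := wpol P γ μ πst πp s₀ with hwdef
  have hwp : IsPolicy w := wpol_isPolicy hP hμ hπst hπp hγ0 hγ1
  -- value of the witness
  have hval_w : value P γ w (ceR P γ πseq s₀ β n) μ
      = ∑ x, μ x * ∑ s ∈ K, dvisit P γ (sigPol πst πp s₀ x) (dirac x) s := by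
    rw [hKdef, value_indicator hP hwp hμ hγ0 hγ1 (ceK P γ πseq s₀ β n) (ceR P γ πseq s₀ β n) (fun s a => rfl), ← hKdef]
    have : dvisit P γ w μ = wdist P γ μ πst πp s₀ :=
      dvisit_wpol hP hμ hπst hπp hγ0 hγ1
    rw [this]
    unfold wdist
    rw [Finset.sum_comm]
    apply Finset.sum_congr rfl
    intro x _
    rw [Finset.mul_sum]
  -- value of π_{n+1}
  have hval_p : value P γ πp (ceR P γ πseq s₀ β n) μ
      = ∑ x, μ x * ∑ s ∈ K, dvisit P γ πp (dirac x) s := by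
    rw [hKdef, value_indicator hP hπp hμ hγ0 hγ1 (ceK P γ πseq s₀ β n) (ceR P γ πseq s₀ β n) (fun s a => rfl), ← hKdef]
    have : ∀ s ∈ K, dvisit P γ πp μ s = ∑ x, μ x * dvisit P γ πp (dirac x) s := by
      intro s _
      exact dvisit_decomp hP hπp hμ hγ0 hγ1 s
    rw [Finset.sum_congr rfl this, Finset.sum_comm]
    apply Finset.sum_congr rfl
    intro x _
    rw [Finset.mul_sum]
  -- apply hopt to the witness
  have hchain : value P γ w (ceR P γ πseq s₀ β n) μ
      ≤ value P γ πp (ceR P γ πseq s₀ β n) μ + ε n := by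
    calc value P γ w (ceR P γ πseq s₀ β n) μ
        ≤ ⨆ π : {π' : S → A → ℝ // IsPolicy π'},
            value P γ π.1 (ceR P γ πseq s₀ β n) μ := by
          exact le_ciSup (bdd_value_range hP hγ0 hγ1 n hμ) ⟨w, hwp⟩
      _ ≤ value P γ πp (ceR P γ πseq s₀ β n) μ + ε n := hopt n hn
  rw [hval_w, hval_p] at hchain
  -- split off the s₀ term; the rest cancels
  set F := fun x : S => ∑ s ∈ K, dvisit P γ (sigPol πst πp s₀ x) (dirac x) s with hF
  set G := fun x : S => ∑ s ∈ K, dvisit P γ πp (dirac x) s with hG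
  have htail : ∀ x ∈ Finset.univ.erase s₀, μ x * F x = μ x * G x := by
    intro x hx
    have hne : x ≠ s₀ := (Finset.mem_erase.mp hx).1
    have : sigPol πst πp s₀ x = πp := by unfold sigPol; rw [if_neg hne]
    rw [hF, hG]
    simp only []
    rw [this]
  have hsplit1 : ∑ x, μ x * F x
      = μ s₀ * F s₀ + ∑ x ∈ Finset.univ.erase s₀, μ x * F x := by
    rw [← Finset.add_sum_erase Finset.univ _ (Finset.mem_univ s₀)]
  have hsplit2 : ∑ x, μ x * G x
      = μ s₀ * G s₀ + ∑ x ∈ Finset.univ.erase s₀, μ x * G x := by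
    rw [← Finset.add_sum_erase Finset.univ _ (Finset.mem_univ s₀)]
  rw [hsplit1, hsplit2, Finset.sum_congr rfl htail] at hchain
  have hkey : μ s₀ * F s₀ ≤ μ s₀ * G s₀ + ε n := by linarith
  have hFs0 : F s₀ = ∑ s ∈ K, dvisit P γ πst (dirac s₀) s := by
    rw [hF]
    simp only []
    have : sigPol πst πp s₀ s₀ = πst := by unfold sigPol; rw [if_pos rfl]
    rw [this]
  have hhalf : (1:ℝ)/2 ≤ μ s₀ := ceMu_succ_s0 hP hπseq hγ0 hγ1 n
  have hεn : 0 ≤ ε n := hε n hn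
  rw [hFs0] at hkey
  by_cases hcmp : ∑ s ∈ K, dvisit P γ πst (dirac s₀) s ≤ G s₀
  · rw [hG] at hcmp; linarith
  · push_neg at hcmp
    have hpos : 0 < μ s₀ := by linarith
    have h2 : μ s₀ * (∑ s ∈ K, dvisit P γ πst (dirac s₀) s - G s₀) ≤ ε n := by nlinarith
    have h3 : (1:ℝ)/2 * (∑ s ∈ K, dvisit P γ πst (dirac s₀) s - G s₀) ≤ ε n := by nlinarith
    rw [hG] at h3
    linarith

end Master
/-- Theorem 1, deterministic form: if for every `n ≤ N` the
policy `π_{n+1}` is `ε_n`-optimal for the intrinsic reward `r_n` with starting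
distribution `μ_n`, then
`Σ_{n=0}^N sup_{π∈Π} Σ_{s∈K_n} d_{δ_{s₀}}^π(s)
  ≤ 2 Σ_{n=0}^N ε_n + 2 Σ_s β̃(s) + 2 Σ_s sup_{π∈Π} d_{δ_{s₀}}^π(s)`. -/
theorem stmt12_ce_provable
    (P : S → A → S → ℝ) (γ : ℝ) (hP : IsKernel P) (hγ0 : 0 ≤ γ) (hγ1 : γ < 1)
    (s₀ : S) (πseq : ℕ → S → A → ℝ) (hπseq : ∀ k, IsPolicy (πseq k))
    (β : ℕ → ℝ) (hβ : ∀ n, 0 ≤ β n) (N : ℕ)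
    (ε : ℕ → ℝ) (hε : ∀ n ≤ N, 0 ≤ ε n)
    (hopt : ∀ n ≤ N,
      (⨆ π : {π' : S → A → ℝ // IsPolicy π'},
        value P γ π.1 (ceR P γ πseq s₀ β n) (ceMu P γ πseq s₀ (n + 1))) ≤
      value P γ (πseq (n + 1)) (ceR P γ πseq s₀ β n) (ceMu P γ πseq s₀ (n + 1))
        + ε n) :
    ∑ n ∈ Finset.range (N + 1),
        (⨆ π : {π' : S → A → ℝ // IsPolicy π'},
          ∑ s ∈ ceK P γ πseq s₀ β n, dvisit P γ π.1 (dirac s₀) s) ≤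
      2 * (∑ n ∈ Finset.range (N + 1), ε n) +
      2 * (∑ s : S, ceBetaTilde P γ πseq s₀ β N s) +
      2 * (∑ s : S, ⨆ π : {π' : S → A → ℝ // IsPolicy π'}, dvisit P γ π.1 (dirac s₀) s) := by
  haveI : Nonempty {π' : S → A → ℝ // IsPolicy π'} := nonempty_policy
  -- abbreviations
  set dv : ℕ → S → ℝ := fun n s => dvisit P γ (πseq (n+1)) (dirac s₀) s with hdv
  set Msup : S → ℝ := fun s =>
    ⨆ π : {π' : S → A → ℝ // IsPolicy π'}, dvisit P γ π.1 (dirac s₀) s with hMsup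
  have hMsup_nonneg : ∀ s, 0 ≤ Msup s := by
    intro s
    have h1 : dvisit P γ (fun (_ : S) (_ : A) => (Fintype.card A : ℝ)⁻¹) (dirac s₀) s ≤ Msup s :=
      le_ciSup (bdd_pt_range hP hγ0 hγ1 (dirac_isDist s₀) s) ⟨_, unif_isPolicy⟩
    have h2 : 0 ≤ dvisit P γ (fun (_ : S) (_ : A) => (Fintype.card A : ℝ)⁻¹) (dirac s₀) s :=
      dvisit_nonneg hP unif_isPolicy (dirac_isDist s₀) hγ0 hγ1 s
    linarith
  have hdv_nonneg : ∀ n s, 0 ≤ dv n s := fun n s =>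
    dvisit_nonneg hP (hπseq (n+1)) (dirac_isDist s₀) hγ0 hγ1 s
  -- Step A: master inequality per n
  have stepA : ∀ n ∈ Finset.range (N+1),
      (⨆ π : {π' : S → A → ℝ // IsPolicy π'},
        ∑ s ∈ ceK P γ πseq s₀ β n, dvisit P γ π.1 (dirac s₀) s)
      ≤ (∑ s ∈ ceK P γ πseq s₀ β n, dv n s) + 2 * ε n := by
    intro n hn
    have hnN : n ≤ N := Nat.lt_succ_iff.mp (Finset.mem_range.mp hn)
    apply ciSup_le
    intro π
    exact master_ineq hP hγ0 hγ1 hπseq N ε hε hopt n hnN π.1 π.2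
  -- Step D: per-state ledger
  have stepD : ∀ s : S,
      (∑ n ∈ Finset.range (N+1), if s ∈ ceK P γ πseq s₀ β n then dv n s else 0)
        ≤ 2 * ceBetaTilde P γ πseq s₀ β N s + Msup s := by
    intro s
    by_cases h : ∃ n ≤ N, s ∈ ceK P γ πseq s₀ β n
    · -- the last round the state is poorly visited
      classical
      set ntil := Nat.findGreatest (fun n => s ∈ ceK P γ πseq s₀ β n) N with hntildef
      have hbt : ceBetaTilde P γ πseq s₀ β N s = β ntil := by
        unfold ceBetaTilde
        rw [if_pos h]
      have hmemntil : s ∈ ceK P γ πseq s₀ β ntil := by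
        obtain ⟨m, hm, hmem⟩ := h
        exact Nat.findGreatest_spec (P := fun n => s ∈ ceK P γ πseq s₀ β n) hm hmem
      have hntilN : ntil ≤ N := Nat.findGreatest_le N
      have hntilmem : ntil ∈ Finset.range (N+1) := Finset.mem_range.mpr (Nat.lt_succ_iff.mpr hntilN)
      -- termwise bound
      set bnd : ℕ → ℝ := fun n => if n = ntil then Msup s
        else (if s ∈ ceK P γ πseq s₀ β n then 2 * ceD P γ πseq s₀ (n+1) s else 0) with hbnd
      have hterm : ∀ n ∈ Finset.range (N+1),
          (if s ∈ ceK P γ πseq s₀ β n then dv n s else 0) ≤ bnd n := by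
        intro n _
        simp only [hbnd]
        by_cases hc : n = ntil
        · subst hc
          rw [if_pos rfl, if_pos hmemntil]
          exact le_ciSup (bdd_pt_range hP hγ0 hγ1 (dirac_isDist s₀) s) ⟨πseq (ntil+1), hπseq (ntil+1)⟩
        · rw [if_neg hc]
          by_cases hm : s ∈ ceK P γ πseq s₀ β n
          · rw [if_pos hm, if_pos hm]
            exact fresh_le_two_ceD hP hπseq hγ0 hγ1 n s
          · rw [if_neg hm, if_neg hm]
      have hsum1 : (∑ n ∈ Finset.range (N+1), if s ∈ ceK P γ πseq s₀ β n then dv n s else 0)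
          ≤ ∑ n ∈ Finset.range (N+1), bnd n := Finset.sum_le_sum hterm
      -- split the ntil term
      have hsplit : ∑ n ∈ Finset.range (N+1), bnd n
          = Msup s + ∑ n ∈ (Finset.range (N+1)).erase ntil, bnd n := by
        rw [← Finset.add_sum_erase _ _ hntilmem]
        simp only [hbnd, if_pos rfl]
      have htail : ∑ n ∈ (Finset.range (N+1)).erase ntil, bnd n
          ≤ 2 * β ntil := by
        have heq : ∀ n ∈ (Finset.range (N+1)).erase ntil,
            bnd n = 2 * (if s ∈ ceK P γ πseq s₀ β n then ceD P γ πseq s₀ (n+1) s else 0) := by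
          intro n hn
          simp only [hbnd]
          rw [if_neg (Finset.mem_erase.mp hn).1]
          by_cases hm : s ∈ ceK P γ πseq s₀ β n
          · rw [if_pos hm, if_pos hm]
          · rw [if_neg hm, if_neg hm, mul_zero]
        rw [Finset.sum_congr rfl heq, ← Finset.mul_sum]
        have hfil : ∑ n ∈ (Finset.range (N+1)).erase ntil,
            (if s ∈ ceK P γ πseq s₀ β n then ceD P γ πseq s₀ (n+1) s else 0)
            = ∑ n ∈ ((Finset.range (N+1)).erase ntil).filter
                (fun n => s ∈ ceK P γ πseq s₀ β n), ceD P γ πseq s₀ (n+1) s := by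
          rw [Finset.sum_filter]
        rw [hfil]
        have himg : ∑ n ∈ ((Finset.range (N+1)).erase ntil).filter
              (fun n => s ∈ ceK P γ πseq s₀ β n), ceD P γ πseq s₀ (n+1) s
            = ∑ m ∈ (((Finset.range (N+1)).erase ntil).filter
              (fun n => s ∈ ceK P γ πseq s₀ β n)).image (· + 1), ceD P γ πseq s₀ m s := by
          rw [Finset.sum_image (by intro x _ y _ hxy; simp only at hxy; omega)]
        rw [himg]
        have hsub : (((Finset.range (N+1)).erase ntil).filter
              (fun n => s ∈ ceK P γ πseq s₀ β n)).image (· + 1) ⊆ Finset.range (ntil+1) := by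
          intro m hm
          obtain ⟨n, hn, rfl⟩ := Finset.mem_image.mp hm
          have h1 := Finset.mem_filter.mp hn
          have h2 := Finset.mem_erase.mp h1.1
          have hnN : n ≤ N := Nat.lt_succ_iff.mp (Finset.mem_range.mp h2.2)
          have hle : n ≤ ntil := Nat.le_findGreatest hnN h1.2
          have hlt : n < ntil := lt_of_le_of_ne hle h2.1
          exact Finset.mem_range.mpr (by omega)
        have hmono : ∑ m ∈ (((Finset.range (N+1)).erase ntil).filter
              (fun n => s ∈ ceK P γ πseq s₀ β n)).image (· + 1), ceD P γ πseq s₀ m s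
            ≤ ∑ m ∈ Finset.range (ntil+1), ceD P γ πseq s₀ m s := by
          apply Finset.sum_le_sum_of_subset_of_nonneg hsub
          intro m _ _
          exact (ceD_isDist hP hπseq hγ0 hγ1 m).1 s
        have hK : ∑ m ∈ Finset.range (ntil+1), ceD P γ πseq s₀ m s ≤ β ntil := by
          have := Finset.mem_filter.mp hmemntil
          exact this.2
        have hβn : 0 ≤ β ntil := hβ ntil
        nlinarith [hmono, hK]
      rw [hbt]
      linarith
    · -- state never poorly visited
      have hzero : ∀ n ∈ Finset.range (N+1),
          (if s ∈ ceK P γ πseq s₀ β n then dv n s else 0) = 0 := by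
        intro n hn
        rw [if_neg]
        intro hmem
        exact h ⟨n, Nat.lt_succ_iff.mp (Finset.mem_range.mp hn), hmem⟩
      rw [Finset.sum_congr rfl hzero, Finset.sum_const, smul_zero]
      have hbt : ceBetaTilde P γ πseq s₀ β N s = 0 := by
        unfold ceBetaTilde
        rw [if_neg h]
      rw [hbt]
      have := hMsup_nonneg s
      linarith
  -- assemble
  calc ∑ n ∈ Finset.range (N + 1),
        (⨆ π : {π' : S → A → ℝ // IsPolicy π'},
          ∑ s ∈ ceK P γ πseq s₀ β n, dvisit P γ π.1 (dirac s₀) s)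
      ≤ ∑ n ∈ Finset.range (N+1), ((∑ s ∈ ceK P γ πseq s₀ β n, dv n s) + 2 * ε n) :=
        Finset.sum_le_sum stepA
    _ = (∑ n ∈ Finset.range (N+1), ∑ s ∈ ceK P γ πseq s₀ β n, dv n s)
        + 2 * ∑ n ∈ Finset.range (N+1), ε n := by
        rw [Finset.sum_add_distrib, Finset.mul_sum]
    _ = (∑ s : S, ∑ n ∈ Finset.range (N+1),
          if s ∈ ceK P γ πseq s₀ β n then dv n s else 0)
        + 2 * ∑ n ∈ Finset.range (N+1), ε n := by
        congr 1
        have hswap : ∀ n ∈ Finset.range (N+1), ∑ s ∈ ceK P γ πseq s₀ β n, dv n s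
            = ∑ s : S, if s ∈ ceK P γ πseq s₀ β n then dv n s else 0 := by
          intro n _
          rw [Finset.sum_ite_mem, Finset.univ_inter]
        rw [Finset.sum_congr rfl hswap, Finset.sum_comm]
    _ ≤ (∑ s : S, (2 * ceBetaTilde P γ πseq s₀ β N s + Msup s))
        + 2 * ∑ n ∈ Finset.range (N+1), ε n := by
        have := Finset.sum_le_sum (fun s (_ : s ∈ Finset.univ) => stepD s)
        linarith
    _ ≤ 2 * (∑ n ∈ Finset.range (N + 1), ε n) +
        2 * (∑ s : S, ceBetaTilde P γ πseq s₀ β N s) +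
        2 * (∑ s : S, Msup s) := by
        rw [Finset.sum_add_distrib, ← Finset.mul_sum]
        have hM : 0 ≤ ∑ s : S, Msup s :=
          Finset.sum_nonneg (fun s _ => hMsup_nonneg s)
        linarith
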